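/- Let q = 2^s, G a subgroup of O_{2m+1}(F_q) acting on S[z] = F_q[y_1,...,y_m,x_m,...,x_1,z], and F ∈ S[z]^G a G-invariant. Write F = f·ξ_0 + a z + b by division by ξ_0 (monic of degree 2 in z) with f ∈ S[z] and a, b ∈ S. Then f and a z + b are both G-invariant, and moreover a ∈ S^G and b ∈ S^{G_z} where G_z is the pointwise stabiliser of z in G. -/

import Mathlib

open MvPolynomial

/-- Variable index set for `S[z] = F_q[y_1,…,y_m,x_m,…,x_1,z]`:
`none` is `z`, `some (inl j)` is `y_j`, `some (inr j)` is `x_j`. -/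
abbrev OIdx (m : ℕ) := Option (Fin m ⊕ Fin m)

/-- The action of an invertible linear map `g` of `V = ι → F` on the polynomial
ring on `V`, so that `eval v (act g f) = eval (g v) f`. -/
noncomputable def act {F : Type*} [Field F] {ι : Type*} [Fintype ι] [DecidableEq ι]
    (g : (ι → F) ≃ₗ[F] (ι → F)) : MvPolynomial ι F →ₐ[F] MvPolynomial ι F :=
  MvPolynomial.aeval fun i => ∑ j, MvPolynomial.C (g (Pi.single j 1) i) * MvPolynomial.X j

/-- The inclusion `S = F_q[y_1,…,y_m,x_m,…,x_1] → S[z]`. -/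
noncomputable def emb (m : ℕ) (F : Type*) [Field F] :
    MvPolynomial (Fin m ⊕ Fin m) F →ₐ[F] MvPolynomial (OIdx m) F :=
  MvPolynomial.rename some

/-- The quadratic form `ξ_0 = z^2 + Σ x_j y_j`. -/
noncomputable def xiZero (m : ℕ) (F : Type*) [Field F] : MvPolynomial (OIdx m) F :=
  X none ^ 2 + ∑ j : Fin m, X (some (Sum.inr j)) * X (some (Sum.inl j))

/-! ### Auxiliary lemmas -/

theorem Aux.apply_eq_sum {F : Type*} [Field F] {ι : Type*} [Fintype ι] [DecidableEq ι]
    (g : (ι → F) ≃ₗ[F] (ι → F)) (v : ι → F) (i : ι) :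
    g v i = ∑ j, g (Pi.single j 1) i * v j := by
  have hv : v = ∑ j, v j • (Pi.single j (1:F) : ι → F) := by
    funext k; simp [Pi.single_apply, Finset.sum_apply]
  conv_lhs => rw [hv, map_sum]
  simp [Finset.sum_apply, mul_comm]

theorem Aux.eval_act {F : Type*} [Field F] {ι : Type*} [Fintype ι] [DecidableEq ι]
    (g : (ι → F) ≃ₗ[F] (ι → F)) (v : ι → F) (p : MvPolynomial ι F) :
    eval v (act g p) = eval (g v) p := by
  have key : (aeval v : MvPolynomial ι F →ₐ[F] F).comp (act g) = aeval (g v) := by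
    rw [act, comp_aeval]
    congr 1
    funext i
    simp [Aux.apply_eq_sum g v i]
  have h := congrArg (fun φ : MvPolynomial ι F →ₐ[F] F => φ p) key
  simpa [coe_aeval_eq_eval] using h

theorem Aux.char_two_of_card {F : Type*} [Field F] [Fintype F] (s : ℕ) (hs : 1 ≤ s)
    (hF : Fintype.card F = 2 ^ s) : CharP F 2 := by
  have h2 : (2 : F) ^ s = 0 := by
    have := FiniteField.cast_card_eq_zero F
    rw [hF] at this
    push_cast at this
    exact this
  have h20 : (2 : F) = 0 := pow_eq_zero_iff (Nat.one_le_iff_ne_zero.mp hs) |>.mp h2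
  have hdvd : ringChar F ∣ 2 := by
    rw [← Nat.cast_ofNat (n := 2)] at h20
    exact (ringChar.spec F 2).mp h20
  rcases (Nat.prime_two.eq_one_or_self_of_dvd _ hdvd) with h | h
  · exact absurd h (ringChar.eq_iff.mpr (ringChar.charP F) ▸ CharP.ringChar_ne_one)
  · rw [← h]; exact ringChar.charP F

section
variable {F : Type*} [Field F] {m : ℕ}

theorem Aux.eval_xiZero (v : OIdx m → F) :
    eval v (xiZero m F) = v none ^ 2 + ∑ j : Fin m, v (some (Sum.inr j)) * v (some (Sum.inl j)) := by
  simp [xiZero]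

/-- The polar bilinear form of `ξ_0` as a function. -/
def Aux.Bf (u w : OIdx m → F) : F :=
  ∑ j : Fin m, (u (some (Sum.inr j)) * w (some (Sum.inl j)) + u (some (Sum.inl j)) * w (some (Sum.inr j)))

theorem Aux.polar_eq [CharP F 2] (u w : OIdx m → F) :
    eval (u + w) (xiZero m F) = eval u (xiZero m F) + eval w (xiZero m F) + Aux.Bf u w := by
  simp only [Aux.eval_xiZero, Pi.add_apply, Aux.Bf]
  rw [CharTwo.add_sq]
  have hsum : ∑ j : Fin m, (u (some (Sum.inr j)) + w (some (Sum.inr j))) * (u (some (Sum.inl j)) + w (some (Sum.inl j)))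
      = ∑ j : Fin m, u (some (Sum.inr j)) * u (some (Sum.inl j))
        + ∑ j : Fin m, w (some (Sum.inr j)) * w (some (Sum.inl j))
        + ∑ j : Fin m, (u (some (Sum.inr j)) * w (some (Sum.inl j)) + u (some (Sum.inl j)) * w (some (Sum.inr j))) := by
    rw [← Finset.sum_add_distrib, ← Finset.sum_add_distrib]
    exact Finset.sum_congr rfl fun j _ => by ring
  rw [hsum]; ring

/-- A linear automorphism preserving `ξ_0` fixes the basis vector `z` (char 2). -/
theorem Aux.g_fixes_z [CharP F 2] (g : (OIdx m → F) ≃ₗ[F] (OIdx m → F))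
    (hg : act g (xiZero m F) = xiZero m F) :
    g (Pi.single none 1) = Pi.single none 1 := by
  have hev : ∀ v, eval (g v) (xiZero m F) = eval v (xiZero m F) := by
    intro v; rw [← Aux.eval_act, hg]
  have hB : ∀ u w, Aux.Bf (g u) (g w) = Aux.Bf (u : OIdx m → F) w := by
    intro u w
    have h1 := Aux.polar_eq (g u) (g w)
    rw [← map_add, hev, hev, hev, Aux.polar_eq u w] at h1
    exact (add_right_injective _ h1).symm
  set z0 : OIdx m → F := Pi.single none 1 with hz0
  have hBz : ∀ w, Aux.Bf z0 w = 0 := by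
    intro w
    simp [Aux.Bf, hz0, Pi.single_apply]
  have hBgz : ∀ w, Aux.Bf (g z0) w = 0 := by
    intro w
    have := hB z0 (g.symm w)
    rwa [g.apply_symm_apply, hBz] at this
  have hinr : ∀ j, g z0 (some (Sum.inr j)) = 0 := by
    intro j
    have := hBgz (Pi.single (some (Sum.inl j)) 1)
    simpa [Aux.Bf, Pi.single_apply, Finset.sum_ite_eq'] using this
  have hinl : ∀ j, g z0 (some (Sum.inl j)) = 0 := by
    intro j
    have := hBgz (Pi.single (some (Sum.inr j)) 1)
    simpa [Aux.Bf, Pi.single_apply, Finset.sum_ite_eq'] using this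
  have hc2 : g z0 none ^ 2 = 1 := by
    have := hev z0
    rw [Aux.eval_xiZero, Aux.eval_xiZero] at this
    simp only [hinr, hinl, zero_mul, mul_zero, Finset.sum_const_zero, add_zero] at this
    simpa [hz0, Pi.single_apply] using this
  have hc1 : g z0 none = 1 := by
    have h : (g z0 none + 1) ^ 2 = 0 := by
      rw [CharTwo.add_sq, hc2, one_pow, CharTwo.add_self_eq_zero]
    have h0 := pow_eq_zero_iff (n := 2) (by norm_num) |>.mp h
    rwa [CharTwo.add_eq_iff_eq_add, zero_add] at h0
  funext i
  match i with
  | none => simpa [hz0, Pi.single_apply] using hc1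
  | some (Sum.inl j) => simpa [hz0, Pi.single_apply] using hinl j
  | some (Sum.inr j) => simpa [hz0, Pi.single_apply] using hinr j

/-- The restriction of the action to `S`. -/
noncomputable def Aux.rho (g : (OIdx m → F) ≃ₗ[F] (OIdx m → F)) :
    MvPolynomial (Fin m ⊕ Fin m) F →ₐ[F] MvPolynomial (Fin m ⊕ Fin m) F :=
  MvPolynomial.aeval fun i => ∑ j, MvPolynomial.C (g (Pi.single (some j) 1) (some i)) * MvPolynomial.X j

/-- The shift of `z` under the action. -/
noncomputable def Aux.ell (g : (OIdx m → F) ≃ₗ[F] (OIdx m → F)) :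
    MvPolynomial (Fin m ⊕ Fin m) F :=
  ∑ j, MvPolynomial.C (g (Pi.single (some j) 1) none) * MvPolynomial.X j

theorem Aux.act_emb (g : (OIdx m → F) ≃ₗ[F] (OIdx m → F))
    (hg : g (Pi.single none 1) = Pi.single none 1)
    (c : MvPolynomial (Fin m ⊕ Fin m) F) :
    act g (emb m F c) = emb m F (Aux.rho g c) := by
  have key : (act g).comp (emb m F) = (emb m F).comp (Aux.rho g) := by
    apply MvPolynomial.algHom_ext
    intro i
    simp only [AlgHom.coe_comp, Function.comp_apply, emb, rename_X, act, Aux.rho, aeval_X,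
      map_sum, map_mul, rename_C]
    rw [Fintype.sum_option]
    have h0 : g (Pi.single none 1) (some i) = 0 := by
      rw [hg]; simp [Pi.single_apply]
    simp [h0]
  exact congrArg (fun φ => φ c) key

theorem Aux.act_X_none (g : (OIdx m → F) ≃ₗ[F] (OIdx m → F))
    (hg : g (Pi.single none 1) = Pi.single none 1) :
    act g (X none) = X none + emb m F (Aux.ell g) := by
  simp only [act, aeval_X, Aux.ell, emb, map_sum, map_mul, rename_C, rename_X]
  rw [Fintype.sum_option]
  have h0 : g (Pi.single none 1) none = 1 := by rw [hg]; simp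
  simp [h0]

theorem Aux.emb_xiBar : (optionEquivLeft F (Fin m ⊕ Fin m)) (xiZero m F)
    = Polynomial.X ^ 2 + Polynomial.C (∑ j : Fin m, X (Sum.inr j) * X (Sum.inl j)) := by
  simp [xiZero, optionEquivLeft_X_none, optionEquivLeft_X_some, map_sum, map_mul, map_pow]

theorem Aux.oEL_emb (c : MvPolynomial (Fin m ⊕ Fin m) F) :
    (optionEquivLeft F (Fin m ⊕ Fin m)) (emb m F c) = Polynomial.C c := by
  have key : (optionEquivLeft F (Fin m ⊕ Fin m)).toAlgHom.comp (emb m F)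
      = Polynomial.CAlgHom := by
    apply MvPolynomial.algHom_ext
    intro i
    simp [emb, optionEquivLeft_X_some, Polynomial.CAlgHom]
  exact congrArg (fun φ => φ c) key

/-- Uniqueness of division by `ξ₀`. -/
theorem Aux.div_unique (f₁ f₂ : MvPolynomial (OIdx m) F) (a₁ b₁ a₂ b₂ : MvPolynomial (Fin m ⊕ Fin m) F)
    (h : f₁ * xiZero m F + emb m F a₁ * X none + emb m F b₁
       = f₂ * xiZero m F + emb m F a₂ * X none + emb m F b₂) :
    f₁ = f₂ ∧ a₁ = a₂ ∧ b₁ = b₂ := by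
  set e := optionEquivLeft F (Fin m ⊕ Fin m)
  set ξ' : Polynomial (MvPolynomial (Fin m ⊕ Fin m) F) :=
    Polynomial.X ^ 2 + Polynomial.C (∑ j : Fin m, X (Sum.inr j) * X (Sum.inl j)) with hξ'
  have hmo : ξ'.Monic := Polynomial.monic_X_pow_add_C _ (by norm_num)
  have hdeg : ξ'.degree = 2 := Polynomial.degree_X_pow_add_C (by norm_num) _
  have he : ∀ (f : MvPolynomial (OIdx m) F) (a b : MvPolynomial (Fin m ⊕ Fin m) F),
      e (f * xiZero m F + emb m F a * X none + emb m F b)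
      = (Polynomial.C a * Polynomial.X + Polynomial.C b) + ξ' * (e f) := by
    intro f a b
    rw [map_add, map_add, map_mul, map_mul, Aux.emb_xiBar, Aux.oEL_emb, Aux.oEL_emb,
      optionEquivLeft_X_none]
    ring
  have hdlt : ∀ a b : MvPolynomial (Fin m ⊕ Fin m) F,
      (Polynomial.C a * Polynomial.X + Polynomial.C b).degree < ξ'.degree := by
    intro a b
    rw [hdeg]
    exact Polynomial.degree_linear_le.trans_lt (by norm_num)
  set P := e (f₁ * xiZero m F + emb m F a₁ * X none + emb m F b₁) with hP
  have h₁ := Polynomial.div_modByMonic_unique (f := P) (e f₁)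
    (Polynomial.C a₁ * Polynomial.X + Polynomial.C b₁) hmo ⟨(he f₁ a₁ b₁).symm, hdlt a₁ b₁⟩
  have h₂ := Polynomial.div_modByMonic_unique (f := P) (e f₂)
    (Polynomial.C a₂ * Polynomial.X + Polynomial.C b₂) hmo
    ⟨by rw [hP, h, he f₂ a₂ b₂], hdlt a₂ b₂⟩
  have hf : e f₁ = e f₂ := h₁.1.symm.trans h₂.1
  have hr : Polynomial.C a₁ * Polynomial.X + Polynomial.C b₁
      = Polynomial.C a₂ * Polynomial.X + Polynomial.C b₂ := h₁.2.symm.trans h₂.2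
  refine ⟨e.injective hf, ?_, ?_⟩
  · have := congrArg (fun p => p.coeff 1) hr
    simpa [Polynomial.coeff_C] using this
  · have := congrArg (fun p => p.coeff 0) hr
    simpa [Polynomial.coeff_C] using this

end

/-- Dividing a `G`-invariant `F ∈ S[z]^G` by `ξ_0` as `F = f ξ_0 + a z + b`
with `a, b ∈ S`: then `f` and `a z + b` are `G`-invariant, `a ∈ S^G`, and
`b ∈ S^{G_z}`, where `G_z` is the pointwise stabiliser of `z` in `G`. -/
theorem stmt_10 {F : Type*} [Field F] [Fintype F] (s m q : ℕ) (hs : 1 ≤ s)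
    (hq : q = 2 ^ s) (hF : Fintype.card F = q)
    (G : Subgroup ((OIdx m → F) ≃ₗ[F] (OIdx m → F)))
    (hG : ∀ g ∈ G, act g (xiZero m F) = xiZero m F)
    (Fp : MvPolynomial (OIdx m) F) (hFp : ∀ g ∈ G, act g Fp = Fp)
    (f : MvPolynomial (OIdx m) F) (a b : MvPolynomial (Fin m ⊕ Fin m) F)
    (hdec : Fp = f * xiZero m F + emb m F a * X none + emb m F b) :
    (∀ g ∈ G, act g f = f) ∧
    (∀ g ∈ G, act g (emb m F a * X none + emb m F b) = emb m F a * X none + emb m F b) ∧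
    (∀ g ∈ G, act g (emb m F a) = emb m F a) ∧
    (∀ g ∈ G, act g (X none) = (X none : MvPolynomial (OIdx m) F) →
      act g (emb m F b) = emb m F b) := by
  haveI : CharP F 2 := Aux.char_two_of_card s hs (by rw [hF, hq])
  have main : ∀ g ∈ G, act g f = f ∧ Aux.rho g a = a ∧
      Aux.rho g a * Aux.ell g + Aux.rho g b = b := by
    intro g hg
    have hz := Aux.g_fixes_z g (hG g hg)
    have hcalc : act g Fp = act g f * xiZero m F
        + emb m F (Aux.rho g a) * X none
        + emb m F (Aux.rho g a * Aux.ell g + Aux.rho g b) := by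
      rw [hdec, map_add, map_add, map_mul, map_mul, hG g hg,
        Aux.act_emb g hz a, Aux.act_emb g hz b, Aux.act_X_none g hz, map_add, map_mul]
      ring
    rw [hFp g hg, hdec] at hcalc
    exact Aux.div_unique f (act g f) a b (Aux.rho g a) (Aux.rho g a * Aux.ell g + Aux.rho g b) hcalc
      |>.imp Eq.symm (fun h => h.imp Eq.symm Eq.symm)
  refine ⟨fun g hg => (main g hg).1, ?_, ?_, ?_⟩
  · intro g hg
    have hz := Aux.g_fixes_z g (hG g hg)
    obtain ⟨h1, h2, h3⟩ := main g hg
    rw [map_add, map_mul, Aux.act_emb g hz a, Aux.act_emb g hz b, Aux.act_X_none g hz, h2]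
    calc emb m F a * (X none + emb m F (Aux.ell g)) + emb m F (Aux.rho g b)
        = emb m F a * X none + emb m F (a * Aux.ell g + Aux.rho g b) := by
          rw [map_add, map_mul]; ring
      _ = emb m F a * X none + emb m F b := by rw [← h2, h3]
  · intro g hg
    have hz := Aux.g_fixes_z g (hG g hg)
    rw [Aux.act_emb g hz a, (main g hg).2.1]
  · intro g hg hfix
    have hz := Aux.g_fixes_z g (hG g hg)
    obtain ⟨h1, h2, h3⟩ := main g hg
    have hell : emb m F (Aux.ell g) = 0 := by
      have := Aux.act_X_none g hz (F := F) (m := m)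
      rw [hfix] at this
      have h' : X none + emb m F (Aux.ell g) = X none + 0 := by rw [add_zero, ← this]
      exact add_right_injective _ h'
    have hell0 : Aux.ell g = (0 : MvPolynomial (Fin m ⊕ Fin m) F) := by
      have hinj : Function.Injective (emb m F) := MvPolynomial.rename_injective _ (Option.some_injective _)
      exact hinj (by rw [hell, map_zero])
    rw [Aux.act_emb g hz b]
    rw [hell0, mul_zero, zero_add] at h3
    rw [h3]
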